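/- Fix θ > 0 and an integer m ≥ θ, and let Q be a stochastic matrix. Then for n ≥ m, ∏_{j=m+1}^n ((1 - θ/j)I + (θ/j)Q) = [∏_{j=m+1}^n (1 - θ/j)] · (I + ∑_{i=1}^{n-m} Q^i ∑_{m < j_1 < ⋯ < j_i ≤ n} ∏_{l=1}^i θ/(j_l - θ)), i.e., the product of kernels I + G/j with G = θ(Q - I) is a polynomial in Q with nonnegative coefficients summing to 1. -/

import Mathlib

/-- The ordered product `∏_{j=m+1}^{m+k} ((1-θ/j)•I + (θ/j)•Q)` of time-inhomogeneous
transition kernels `K_j = I + G/j` with `G = θ(Q - I)`. -/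
noncomputable def kernelProd {𝒳 : Type*} [Fintype 𝒳] [DecidableEq 𝒳]
    (Q : Matrix 𝒳 𝒳 ℝ) (θ : ℝ) (m : ℕ) : ℕ → Matrix 𝒳 𝒳 ℝ
  | 0 => 1
  | (k+1) => kernelProd Q θ m k *
      ((1 - θ / ((m:ℝ) + k + 1)) • (1 : Matrix 𝒳 𝒳 ℝ) + (θ / ((m:ℝ) + k + 1)) • Q)

open Finset Polynomial

lemma sum_powerset_split {M : Type*} [AddCommMonoid M] (s : Finset ℕ) (f : Finset ℕ → M) :
    ∑ t ∈ s.powerset, f t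
      = f ∅ + ∑ i ∈ Finset.Icc 1 s.card, ∑ t ∈ Finset.powersetCard i s, f t := by
  rw [Finset.sum_powerset]
  have h : Finset.range (s.card + 1) = insert 0 (Finset.Icc 1 s.card) := by
    ext x; simp [Finset.mem_range, Finset.mem_Icc]; omega
  rw [h, Finset.sum_insert (by simp), Finset.powersetCard_zero, Finset.sum_singleton]

lemma kernelProd_aeval {𝒳 : Type*} [Fintype 𝒳] [DecidableEq 𝒳]
    (Q : Matrix 𝒳 𝒳 ℝ) (θ : ℝ) (m k : ℕ) :
    kernelProd Q θ m k = Polynomial.aeval Q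
      (∏ j ∈ Finset.Icc (m+1) (m+k),
        (Polynomial.C (1 - θ/(j:ℝ)) + Polynomial.C (θ/(j:ℝ)) * Polynomial.X)) := by
  induction k with
  | zero => simp [kernelProd]
  | succ k ih =>
    have hins : Finset.Icc (m+1) (m+(k+1)) = insert (m+k+1) (Finset.Icc (m+1) (m+k)) := by
      ext x; simp [Finset.mem_Icc]; omega
    rw [kernelProd, ih, hins, Finset.prod_insert (by simp), mul_comm, map_mul]
    congr 1
    push_cast
    simp only [map_add, map_mul, aeval_C, aeval_X, Algebra.algebraMap_eq_smul_one, add_assoc]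
    rw [sub_smul, one_smul, smul_mul_assoc, one_mul]

lemma poly_expand (θ : ℝ) (s : Finset ℕ) (hs : ∀ j ∈ s, θ < (j:ℝ)) (hθ : 0 < θ) :
    ∏ j ∈ s, (Polynomial.C (1 - θ/(j:ℝ)) + Polynomial.C (θ/(j:ℝ)) * Polynomial.X)
      = Polynomial.C (∏ j ∈ s, (1 - θ/(j:ℝ))) *
        (1 + ∑ i ∈ Finset.Icc 1 s.card,
          Polynomial.C (∑ t ∈ Finset.powersetCard i s, ∏ l ∈ t, θ/((l:ℝ)-θ)) *
            Polynomial.X ^ i) := by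
  have hfac : ∀ j ∈ s, Polynomial.C (1 - θ/(j:ℝ)) + Polynomial.C (θ/(j:ℝ)) * Polynomial.X
      = Polynomial.C (1 - θ/(j:ℝ)) * (Polynomial.C (θ/((j:ℝ)-θ)) * Polynomial.X + 1) := by
    intro j hj
    have h1 : (0:ℝ) < j := lt_trans hθ (hs j hj)
    have h2 : (j:ℝ) - θ ≠ 0 := by have := hs j hj; linarith
    rw [mul_add, mul_one, ← mul_assoc, ← Polynomial.C_mul, add_comm]
    congr 2
    field_simp
  rw [Finset.prod_congr rfl hfac, Finset.prod_mul_distrib, ← map_prod]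
  congr 1
  rw [Finset.prod_add]
  simp only [Finset.prod_const_one, mul_one, Finset.prod_mul_distrib, Finset.prod_const,
    ← map_prod]
  rw [sum_powerset_split s (fun t => Polynomial.C (∏ l ∈ t, θ/((l:ℝ)-θ)) * Polynomial.X ^ t.card)]
  simp only [Finset.prod_empty, map_one, one_mul, pow_zero]
  congr 1
  refine Finset.sum_congr rfl fun i _ => ?_
  rw [map_sum Polynomial.C _ _, Finset.sum_mul]
  refine Finset.sum_congr rfl fun t ht => ?_
  rw [(Finset.mem_powersetCard.mp ht).2]

theorem stmt13 {𝒳 : Type*} [Fintype 𝒳] [DecidableEq 𝒳]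
    (Q : Matrix 𝒳 𝒳 ℝ) (θ : ℝ) (hθ : 0 < θ) (m n : ℕ)
    (hm : θ ≤ (m:ℝ)) (hmn : m ≤ n) :
    kernelProd Q θ m (n - m)
      = (∏ j ∈ Finset.Icc (m+1) n, (1 - θ / (j:ℝ))) •
        ((1 : Matrix 𝒳 𝒳 ℝ) + ∑ i ∈ Finset.Icc 1 (n-m),
          (∑ s ∈ Finset.powersetCard i (Finset.Icc (m+1) n),
            ∏ l ∈ s, θ / ((l:ℝ) - θ)) • Q ^ i)
    ∧ (0 ≤ ∏ j ∈ Finset.Icc (m+1) n, (1 - θ / (j:ℝ)))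
    ∧ (∀ i ∈ Finset.Icc 1 (n-m),
        0 ≤ (∏ j ∈ Finset.Icc (m+1) n, (1 - θ / (j:ℝ))) *
          ∑ s ∈ Finset.powersetCard i (Finset.Icc (m+1) n), ∏ l ∈ s, θ / ((l:ℝ) - θ))
    ∧ (∏ j ∈ Finset.Icc (m+1) n, (1 - θ / (j:ℝ))) *
        (1 + ∑ i ∈ Finset.Icc 1 (n-m),
          ∑ s ∈ Finset.powersetCard i (Finset.Icc (m+1) n), ∏ l ∈ s, θ / ((l:ℝ) - θ)) = 1 := by
  have hcard : (Finset.Icc (m+1) n).card = n - m := by rw [Nat.card_Icc]; omega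
  have hs : ∀ j ∈ Finset.Icc (m+1) n, θ < (j:ℝ) := by
    intro j hj
    have h1 := (Finset.mem_Icc.mp hj).1
    have h2 : (m:ℝ) + 1 ≤ j := by exact_mod_cast h1
    linarith
  have hd : 0 ≤ ∏ j ∈ Finset.Icc (m+1) n, (1 - θ / (j:ℝ)) := by
    refine Finset.prod_nonneg fun j hj => ?_
    have h1 := hs j hj
    have h2 : (0:ℝ) < j := lt_trans hθ h1
    have : θ / (j:ℝ) ≤ 1 := (div_le_one h2).mpr (le_of_lt h1)
    linarith
  have hpoly := poly_expand θ (Finset.Icc (m+1) n) hs hθ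
  rw [hcard] at hpoly
  refine ⟨?_, hd, ?_, ?_⟩
  · have hk := kernelProd_aeval Q θ m (n - m)
    rw [Nat.add_sub_cancel' hmn] at hk
    rw [hk, hpoly]
    simp only [map_mul, map_add, map_one, map_sum, map_pow, Polynomial.aeval_C,
      Polynomial.aeval_X, Algebra.algebraMap_eq_smul_one, smul_mul_assoc, one_mul]
    simp only [← Finset.sum_smul, smul_mul_assoc, one_mul]
  · intro i _
    refine mul_nonneg hd (Finset.sum_nonneg fun t ht => Finset.prod_nonneg fun l hl => ?_)
    have hls : l ∈ Finset.Icc (m+1) n := (Finset.mem_powersetCard.mp ht).1 hl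
    have := hs l hls
    have : (0:ℝ) < (l:ℝ) - θ := by linarith
    positivity
  · have heval := congrArg (Polynomial.eval (1:ℝ)) hpoly
    simp only [Polynomial.eval_prod, Polynomial.eval_add, Polynomial.eval_mul,
      Polynomial.eval_one, Polynomial.eval_C, Polynomial.eval_X, Polynomial.eval_pow,
      Polynomial.eval_finset_sum, mul_one, one_pow, sub_add_cancel,
      Finset.prod_const_one] at heval
    linarith [heval]
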